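/- For every d \geq 2 there exists \lambda \in \mathbb{C} with \lambda \neq 0 such that P_{d,d}(\lambda) = 0, P_{d+1,d+1}(\lambda) \neq 0, and P_{d+1,d-1}(\lambda) P_{d+2,d-1}(\lambda) - P_{d+1,d-2}(\lambda) P_{d+2,d}(\lambda) \neq 0. -/

import Mathlib

/-- The multinomial coefficient `(a+b+c)! / (a! b! c!)`. -/
def mult3 (a b c : ℕ) : ℕ := (a + b + c).factorial / (a.factorial * b.factorial * c.factorial)

/-- `P k n z = ∑_{b=0}^{⌊n/2⌋} multinomial(k+n-b; k, b, n-2b) z^b`. -/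
noncomputable def Pval (k n : ℕ) (z : ℂ) : ℂ :=
  ∑ b ∈ Finset.range (n / 2 + 1), (mult3 k b (n - 2 * b) : ℂ) * z ^ b

lemma mult3_key (a b c : ℕ) :
    (a.factorial * b.factorial * c.factorial) * ((a+b+c).choose a * (b+c).choose b) = (a+b+c).factorial := by
  have h1 : (a+b+c).choose a * a.factorial * (b+c).factorial = (a+b+c).factorial := by
    have h := Nat.choose_mul_factorial_mul_factorial (Nat.le_add_right a (b+c))
    rwa [show a + (b+c) - a = b + c by omega, ← Nat.add_assoc] at h
  have h2 : (b+c).choose b * b.factorial * c.factorial = (b+c).factorial := by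
    have h := Nat.choose_mul_factorial_mul_factorial (Nat.le_add_right b c)
    rwa [show b + c - b = c by omega] at h
  calc (a.factorial * b.factorial * c.factorial) * ((a+b+c).choose a * (b+c).choose b)
      = ((a+b+c).choose a * a.factorial) * ((b+c).choose b * b.factorial * c.factorial) := by ring
    _ = ((a+b+c).choose a * a.factorial) * (b+c).factorial := by rw [h2]
    _ = (a+b+c).factorial := by rw [← h1]

lemma mult3_eq_choose (a b c : ℕ) : mult3 a b c = (a+b+c).choose a * (b+c).choose b := by
  unfold mult3
  rw [← mult3_key a b c]
  exact Nat.mul_div_cancel_left _ (by positivity)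

lemma mult3_mulC (a b c : ℕ) :
    (mult3 a b c : ℂ) * ((a.factorial:ℂ) * (b.factorial:ℂ) * (c.factorial:ℂ))
      = ((a+b+c).factorial : ℂ) := by
  rw [mult3_eq_choose]
  push_cast [← mult3_key a b c]
  ring

lemma mult3_pos (a b c : ℕ) : 0 < mult3 a b c := by
  rw [mult3_eq_choose]
  exact Nat.mul_pos (Nat.choose_pos (by omega)) (Nat.choose_pos (by omega))

/-- coefficient function with the range condition built in -/
def co (k n b : ℕ) : ℕ := if 2*b ≤ n then mult3 k b (n - 2*b) else 0

lemma Pval_eq (k n : ℕ) (z : ℂ) (N : ℕ) (hN : n + 1 ≤ N) :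
    Pval k n z = ∑ b ∈ Finset.range N, (co k n b : ℂ) * z ^ b := by
  unfold Pval
  rw [show (∑ b ∈ Finset.range (n / 2 + 1), (mult3 k b (n - 2 * b) : ℂ) * z ^ b)
      = ∑ b ∈ Finset.range (n / 2 + 1), (co k n b : ℂ) * z ^ b from
    Finset.sum_congr rfl (fun b hb => by
      simp only [Finset.mem_range] at hb
      rw [co, if_pos (by omega)])]
  apply Finset.sum_subset
  · intro b hb; simp only [Finset.mem_range] at *; omega
  · intro b _ hb
    simp only [Finset.mem_range, not_lt] at hb
    rw [co, if_neg (by omega)]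
    simp

lemma shiftz_co (k n N : ℕ) (z : ℂ) (hN : n < N) :
    z * ∑ b ∈ Finset.range (N+1), (co k n b : ℂ) * z ^ b
      = ∑ b ∈ Finset.range (N+1), (if b = 0 then 0 else (co k n (b-1) : ℂ)) * z ^ b := by
  rw [Finset.sum_range_succ' (fun b => (if b = 0 then (0:ℂ) else (co k n (b-1) : ℂ)) * z ^ b) N]
  simp only [Nat.succ_ne_zero, if_false, Nat.add_sub_cancel, if_pos rfl, zero_mul, add_zero,
    if_true]
  rw [Finset.mul_sum, Finset.sum_range_succ (fun b => z * ((co k n b : ℂ) * z ^ b)) N]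
  rw [show (co k n N : ℂ) = 0 by rw [co, if_neg (by omega)]; simp]
  simp only [zero_mul, mul_zero, add_zero]
  exact Finset.sum_congr rfl fun b _ => by ring
-- coefficient identities
lemma c3z (k m : ℕ) :
    ((m:ℂ)+2) * (co k (m+2) 0 : ℕ) = ((m:ℂ)+(k:ℂ)+2) * (co k (m+1) 0 : ℕ) := by
  rw [co, if_pos (by omega), co, if_pos (by omega),
      show m+2 - 2*0 = m+2 by omega, show m+1 - 2*0 = m+1 by omega]
  apply mul_right_cancel₀ (b := ((k.factorial * ((m+2)*((m+1)*m.factorial)) : ℕ) : ℂ))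
    (Nat.cast_ne_zero.mpr (by positivity))
  have e1 := mult3_mulC k 0 (m+2)
  have e2 := mult3_mulC k 0 (m+1)
  rw [show k+0+(m+2) = ((k+m)+1)+1 by ring, show m+2 = (m+1)+1 by ring] at e1
  rw [show k+0+(m+1) = (k+m)+1 by ring] at e2
  simp only [Nat.factorial_succ, Nat.factorial_zero] at e1 e2
  push_cast at e1 e2 ⊢
  linear_combination ((m:ℂ)+2) * e1 - ((m:ℂ)+(k:ℂ)+2)*((m:ℂ)+2) * e2

lemma c3s (k m b : ℕ) :
    ((m:ℂ)+2) * (co k (m+2) (b+1) : ℕ) = ((m:ℂ)+(k:ℂ)+2) * (co k (m+1) (b+1) : ℕ)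
      + ((m:ℂ)+2*(k:ℂ)+2) * (co k m b : ℕ) := by
  rcases lt_trichotomy (2*b) m with h | h | h
  · obtain ⟨s, rfl⟩ : ∃ s, m = 2*b + (s+1) := ⟨m - 2*b - 1, by omega⟩
    rw [co, if_pos (by omega), co, if_pos (by omega), co, if_pos (by omega)]
    rw [show 2*b+(s+1)+2 - 2*(b+1) = s+1 by omega,
        show 2*b+(s+1)+1 - 2*(b+1) = s by omega,
        show 2*b+(s+1) - 2*b = s+1 by omega]
    apply mul_right_cancel₀ (b := ((k.factorial * ((b+1)*b.factorial) * ((s+1)*s.factorial) : ℕ) : ℂ))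
      (Nat.cast_ne_zero.mpr (by positivity))
    have e1 := mult3_mulC k (b+1) (s+1)
    have e2 := mult3_mulC k (b+1) s
    have e3 := mult3_mulC k b (s+1)
    rw [show k+(b+1)+(s+1) = ((k+b+s)+1)+1 by ring] at e1
    rw [show k+(b+1)+s = (k+b+s)+1 by ring] at e2
    rw [show k+b+(s+1) = (k+b+s)+1 by ring] at e3
    simp only [Nat.factorial_succ] at e1 e2 e3
    push_cast at e1 e2 e3 ⊢
    linear_combination (2*(b:ℂ)+(s:ℂ)+3) * e1
      - (2*(b:ℂ)+(s:ℂ)+(k:ℂ)+3)*((s:ℂ)+1) * e2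
      - (2*(b:ℂ)+(s:ℂ)+2*(k:ℂ)+3)*((b:ℂ)+1) * e3
  · obtain rfl : m = 2*b := by omega
    rw [co, if_pos (by omega), co, if_neg (by omega), co, if_pos (by omega)]
    rw [show 2*b+2 - 2*(b+1) = 0 by omega, show 2*b - 2*b = 0 by omega]
    apply mul_right_cancel₀ (b := ((k.factorial * ((b+1)*b.factorial) : ℕ) : ℂ))
      (Nat.cast_ne_zero.mpr (by positivity))
    have e1 := mult3_mulC k (b+1) 0
    have e3 := mult3_mulC k b 0
    rw [show k+(b+1)+0 = (k+b)+1 by ring] at e1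
    rw [show k+b+0 = k+b by ring] at e3
    simp only [Nat.factorial_succ, Nat.factorial_zero] at e1 e3
    push_cast at e1 e3 ⊢
    linear_combination (2*(b:ℂ)+2) * e1 - (2*(b:ℂ)+2*(k:ℂ)+2)*((b:ℂ)+1) * e3
  · rw [co, if_neg (by omega), co, if_neg (by omega), co, if_neg (by omega)]
    simp

lemma c1z (k m : ℕ) :
    ((co (k+1) (m+2) 0 : ℕ) : ℂ) = (co k (m+2) 0 : ℕ) + (co (k+1) (m+1) 0 : ℕ) := by
  rw [co, if_pos (by omega), co, if_pos (by omega), co, if_pos (by omega),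
      show m+2 - 2*0 = m+2 by omega, show m+1 - 2*0 = m+1 by omega]
  apply mul_right_cancel₀ (b := ((((k+1)*k.factorial) * ((m+2)*((m+1)*m.factorial)) : ℕ) : ℂ))
    (Nat.cast_ne_zero.mpr (by positivity))
  have e1 := mult3_mulC (k+1) 0 (m+2)
  have e2 := mult3_mulC k 0 (m+2)
  have e3 := mult3_mulC (k+1) 0 (m+1)
  rw [show (k+1)+0+(m+2) = (((k+m)+1)+1)+1 by ring, show m+2 = (m+1)+1 by ring] at e1
  rw [show k+0+(m+2) = ((k+m)+1)+1 by ring, show m+2 = (m+1)+1 by ring] at e2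
  rw [show (k+1)+0+(m+1) = ((k+m)+1)+1 by ring] at e3
  simp only [Nat.factorial_succ, Nat.factorial_zero] at e1 e2 e3
  push_cast at e1 e2 e3 ⊢
  linear_combination e1 - ((k:ℂ)+1) * e2 - ((m:ℂ)+2) * e3

lemma c1s (k m b : ℕ) :
    ((co (k+1) (m+2) (b+1) : ℕ) : ℂ) = (co k (m+2) (b+1) : ℕ) + (co (k+1) (m+1) (b+1) : ℕ)
      + (co (k+1) m b : ℕ) := by
  rcases lt_trichotomy (2*b) m with h | h | h
  · obtain ⟨s, rfl⟩ : ∃ s, m = 2*b + (s+1) := ⟨m - 2*b - 1, by omega⟩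
    rw [co, if_pos (by omega), co, if_pos (by omega), co, if_pos (by omega), co, if_pos (by omega)]
    rw [show 2*b+(s+1)+2 - 2*(b+1) = s+1 by omega,
        show 2*b+(s+1)+1 - 2*(b+1) = s by omega,
        show 2*b+(s+1) - 2*b = s+1 by omega]
    apply mul_right_cancel₀
      (b := ((((k+1)*k.factorial) * ((b+1)*b.factorial) * ((s+1)*s.factorial) : ℕ) : ℂ))
      (Nat.cast_ne_zero.mpr (by positivity))
    have e1 := mult3_mulC (k+1) (b+1) (s+1)
    have e2 := mult3_mulC k (b+1) (s+1)
    have e3 := mult3_mulC (k+1) (b+1) s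
    have e4 := mult3_mulC (k+1) b (s+1)
    rw [show (k+1)+(b+1)+(s+1) = (((k+b+s)+1)+1)+1 by ring] at e1
    rw [show k+(b+1)+(s+1) = ((k+b+s)+1)+1 by ring] at e2
    rw [show (k+1)+(b+1)+s = ((k+b+s)+1)+1 by ring] at e3
    rw [show (k+1)+b+(s+1) = ((k+b+s)+1)+1 by ring] at e4
    simp only [Nat.factorial_succ] at e1 e2 e3 e4
    push_cast at e1 e2 e3 e4 ⊢
    linear_combination e1 - ((k:ℂ)+1) * e2 - ((s:ℂ)+1) * e3 - ((b:ℂ)+1) * e4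
  · obtain rfl : m = 2*b := by omega
    rw [co, if_pos (by omega), co, if_pos (by omega), co, if_neg (by omega), co, if_pos (by omega)]
    rw [show 2*b+2 - 2*(b+1) = 0 by omega, show 2*b - 2*b = 0 by omega]
    apply mul_right_cancel₀ (b := ((((k+1)*k.factorial) * ((b+1)*b.factorial) : ℕ) : ℂ))
      (Nat.cast_ne_zero.mpr (by positivity))
    have e1 := mult3_mulC (k+1) (b+1) 0
    have e2 := mult3_mulC k (b+1) 0
    have e4 := mult3_mulC (k+1) b 0
    rw [show (k+1)+(b+1)+0 = ((k+b)+1)+1 by ring] at e1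
    rw [show k+(b+1)+0 = (k+b)+1 by ring] at e2
    rw [show (k+1)+b+0 = (k+b)+1 by ring] at e4
    simp only [Nat.factorial_succ, Nat.factorial_zero] at e1 e2 e4
    push_cast at e1 e2 e4 ⊢
    linear_combination e1 - ((k:ℂ)+1) * e2 - ((b:ℂ)+1) * e4
  · rw [co, if_neg (by omega), co, if_neg (by omega), co, if_neg (by omega), co, if_neg (by omega)]
    simp

lemma c2z (k m : ℕ) :
    ((m:ℂ)+2) * (co k (m+2) 0 : ℕ) = ((k:ℂ)+1) * (co (k+1) (m+1) 0 : ℕ) := by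
  rw [co, if_pos (by omega), co, if_pos (by omega),
      show m+2 - 2*0 = m+2 by omega, show m+1 - 2*0 = m+1 by omega]
  apply mul_right_cancel₀ (b := ((((k+1)*k.factorial) * ((m+2)*((m+1)*m.factorial)) : ℕ) : ℂ))
    (Nat.cast_ne_zero.mpr (by positivity))
  have e1 := mult3_mulC k 0 (m+2)
  have e2 := mult3_mulC (k+1) 0 (m+1)
  rw [show k+0+(m+2) = ((k+m)+1)+1 by ring, show m+2 = (m+1)+1 by ring] at e1
  rw [show (k+1)+0+(m+1) = ((k+m)+1)+1 by ring] at e2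
  simp only [Nat.factorial_succ, Nat.factorial_zero] at e1 e2
  push_cast at e1 e2 ⊢
  linear_combination ((m:ℂ)+2)*((k:ℂ)+1) * e1 - ((k:ℂ)+1)*((m:ℂ)+2) * e2

lemma c2s (k m b : ℕ) :
    ((m:ℂ)+2) * (co k (m+2) (b+1) : ℕ) = ((k:ℂ)+1) * (co (k+1) (m+1) (b+1) : ℕ)
      + 2*((k:ℂ)+1) * (co (k+1) m b : ℕ) := by
  rcases lt_trichotomy (2*b) m with h | h | h
  · obtain ⟨s, rfl⟩ : ∃ s, m = 2*b + (s+1) := ⟨m - 2*b - 1, by omega⟩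
    rw [co, if_pos (by omega), co, if_pos (by omega), co, if_pos (by omega)]
    rw [show 2*b+(s+1)+2 - 2*(b+1) = s+1 by omega,
        show 2*b+(s+1)+1 - 2*(b+1) = s by omega,
        show 2*b+(s+1) - 2*b = s+1 by omega]
    apply mul_right_cancel₀
      (b := ((((k+1)*k.factorial) * ((b+1)*b.factorial) * ((s+1)*s.factorial) : ℕ) : ℂ))
      (Nat.cast_ne_zero.mpr (by positivity))
    have e1 := mult3_mulC k (b+1) (s+1)
    have e3 := mult3_mulC (k+1) (b+1) s
    have e4 := mult3_mulC (k+1) b (s+1)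
    rw [show k+(b+1)+(s+1) = ((k+b+s)+1)+1 by ring] at e1
    rw [show (k+1)+(b+1)+s = ((k+b+s)+1)+1 by ring] at e3
    rw [show (k+1)+b+(s+1) = ((k+b+s)+1)+1 by ring] at e4
    simp only [Nat.factorial_succ] at e1 e3 e4
    push_cast at e1 e3 e4 ⊢
    linear_combination (2*(b:ℂ)+(s:ℂ)+3)*((k:ℂ)+1) * e1
      - ((k:ℂ)+1)*((s:ℂ)+1) * e3 - 2*((k:ℂ)+1)*((b:ℂ)+1) * e4
  · obtain rfl : m = 2*b := by omega
    rw [co, if_pos (by omega), co, if_neg (by omega), co, if_pos (by omega)]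
    rw [show 2*b+2 - 2*(b+1) = 0 by omega, show 2*b - 2*b = 0 by omega]
    apply mul_right_cancel₀ (b := ((((k+1)*k.factorial) * ((b+1)*b.factorial) : ℕ) : ℂ))
      (Nat.cast_ne_zero.mpr (by positivity))
    have e1 := mult3_mulC k (b+1) 0
    have e4 := mult3_mulC (k+1) b 0
    rw [show k+(b+1)+0 = (k+b)+1 by ring] at e1
    rw [show (k+1)+b+0 = (k+b)+1 by ring] at e4
    simp only [Nat.factorial_succ, Nat.factorial_zero] at e1 e4
    push_cast at e1 e4 ⊢
    linear_combination (2*(b:ℂ)+2)*((k:ℂ)+1) * e1 - 2*((k:ℂ)+1)*((b:ℂ)+1) * e4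
  · rw [co, if_neg (by omega), co, if_neg (by omega), co, if_neg (by omega)]
    simp
lemma cJz (m : ℕ) :
    ((m:ℂ)+2) * (co (m+2) (m+2) 0 : ℕ) = (3*(m:ℂ)+5) * (co (m+1) (m+1) 0 : ℕ)
      + ((m:ℂ)+2) * (co (m+2) m 0 : ℕ) := by
  rw [co, if_pos (by omega), co, if_pos (by omega), co, if_pos (by omega),
      show m+2 - 2*0 = m+2 by omega, show m+1 - 2*0 = m+1 by omega, show m - 2*0 = m by omega]
  apply mul_right_cancel₀
    (b := ((((m+2)*((m+1)*m.factorial)) * ((m+2)*((m+1)*m.factorial)) : ℕ) : ℂ))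
    (Nat.cast_ne_zero.mpr (by positivity))
  have e1 := mult3_mulC (m+2) 0 (m+2)
  have e2 := mult3_mulC (m+1) 0 (m+1)
  have e3 := mult3_mulC (m+2) 0 m
  rw [show (m+2)+0+(m+2) = ((2*m+2)+1)+1 by ring, show m+2 = (m+1)+1 by ring] at e1
  rw [show (m+1)+0+(m+1) = 2*m+2 by ring] at e2
  rw [show (m+2)+0+m = 2*m+2 by ring, show m+2 = (m+1)+1 by ring] at e3
  simp only [Nat.factorial_succ, Nat.factorial_zero] at e1 e2 e3
  push_cast at e1 e2 e3 ⊢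
  linear_combination ((m:ℂ)+2) * e1 - (3*(m:ℂ)+5)*((m:ℂ)+2)^2 * e2
    - ((m:ℂ)+2)*((m:ℂ)+2)*((m:ℂ)+1) * e3

lemma cJs (m b : ℕ) :
    ((m:ℂ)+2) * (co (m+2) (m+2) (b+1) : ℕ) = (3*(m:ℂ)+5) * (co (m+1) (m+1) (b+1) : ℕ)
      + ((m:ℂ)+2) * (co (m+2) m (b+1) : ℕ) + 3*((m:ℂ)+2) * (co (m+2) m b : ℕ) := by
  rcases (by omega : m < 2*b ∨ m = 2*b ∨ m = 2*b+1 ∨ 2*b+2 ≤ m) with h | h | h | h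
  · rw [co, if_neg (by omega), co, if_neg (by omega), co, if_neg (by omega), co, if_neg (by omega)]
    simp
  · obtain rfl : m = 2*b := h
    rw [co, if_pos (by omega), co, if_neg (by omega), co, if_neg (by omega), co, if_pos (by omega)]
    rw [show 2*b+2 - 2*(b+1) = 0 by omega, show 2*b - 2*b = 0 by omega]
    apply mul_right_cancel₀
      (b := ((((2*b+2)*((2*b+1)*(2*b).factorial)) * ((b+1)*b.factorial) : ℕ) : ℂ))
      (Nat.cast_ne_zero.mpr (by positivity))
    have e1 := mult3_mulC (2*b+2) (b+1) 0
    have e4 := mult3_mulC (2*b+2) b 0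
    rw [show (2*b+2)+(b+1)+0 = 3*b+3 by ring] at e1
    rw [show (2*b+2)+b+0 = 3*b+2 by ring] at e4
    simp only [Nat.factorial_succ, Nat.factorial_zero] at e1 e4
    push_cast at e1 e4 ⊢
    linear_combination (2*(b:ℂ)+2) * e1 - 3*(2*(b:ℂ)+2)*((b:ℂ)+1) * e4
  · obtain rfl : m = 2*b+1 := h
    rw [co, if_pos (by omega), co, if_pos (by omega), co, if_neg (by omega), co, if_pos (by omega)]
    rw [show 2*b+1+2 - 2*(b+1) = 1 by omega, show 2*b+1+1 - 2*(b+1) = 0 by omega,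
        show 2*b+1 - 2*b = 1 by omega]
    apply mul_right_cancel₀
      (b := ((((2*b+3)*((2*b+2)*((2*b+1)*(2*b).factorial))) * ((b+1)*b.factorial) : ℕ) : ℂ))
      (Nat.cast_ne_zero.mpr (by positivity))
    have e1 := mult3_mulC (2*b+1+2) (b+1) 1
    have e2 := mult3_mulC (2*b+1+1) (b+1) 0
    have e4 := mult3_mulC (2*b+1+2) b 1
    rw [show (2*b+1+2)+(b+1)+1 = 3*b+5 by ring] at e1
    rw [show (2*b+1+1)+(b+1)+0 = 3*b+3 by ring] at e2
    rw [show (2*b+1+2)+b+1 = 3*b+4 by ring] at e4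
    simp only [Nat.factorial_succ, Nat.factorial_zero, Nat.factorial_one] at e1 e2 e4
    push_cast at e1 e2 e4 ⊢
    linear_combination (2*(b:ℂ)+3) * e1 - (6*(b:ℂ)+8)*(2*(b:ℂ)+3) * e2
      - 3*(2*(b:ℂ)+3)*((b:ℂ)+1) * e4
  · obtain ⟨s, rfl⟩ : ∃ s, m = 2*b+2+s := ⟨m - 2*b - 2, by omega⟩
    rw [co, if_pos (by omega), co, if_pos (by omega), co, if_pos (by omega), co, if_pos (by omega)]
    rw [show 2*b+2+s+2 - 2*(b+1) = s+2 by omega, show 2*b+2+s+1 - 2*(b+1) = s+1 by omega,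
        show 2*b+2+s - 2*(b+1) = s by omega, show 2*b+2+s - 2*b = s+2 by omega]
    apply mul_right_cancel₀
      (b := ((((2*b+s+4)*((2*b+s+3)*(2*b+2+s).factorial)) * ((b+1)*b.factorial)
              * ((s+2)*((s+1)*s.factorial)) : ℕ) : ℂ))
      (Nat.cast_ne_zero.mpr (by positivity))
    have e1 := mult3_mulC (2*b+2+s+2) (b+1) (s+2)
    have e2 := mult3_mulC (2*b+2+s+1) (b+1) (s+1)
    have e3 := mult3_mulC (2*b+2+s+2) (b+1) s
    have e4 := mult3_mulC (2*b+2+s+2) b (s+2)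
    rw [show (2*b+2+s+2)+(b+1)+(s+2) = ((3*b+2*s+5)+1)+1 by ring,
        show 2*b+2+s+2 = ((2*b+2+s)+1)+1 by ring, show s+2 = (s+1)+1 by ring] at e1
    rw [show (2*b+2+s+1)+(b+1)+(s+1) = 3*b+2*s+5 by ring,
        show 2*b+2+s+1 = (2*b+2+s)+1 by ring] at e2
    rw [show (2*b+2+s+2)+(b+1)+s = 3*b+2*s+5 by ring,
        show 2*b+2+s+2 = ((2*b+2+s)+1)+1 by ring] at e3
    rw [show (2*b+2+s+2)+b+(s+2) = (3*b+2*s+5)+1 by ring,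
        show 2*b+2+s+2 = ((2*b+2+s)+1)+1 by ring, show s+2 = (s+1)+1 by ring] at e4
    simp only [Nat.factorial_succ] at e1 e2 e3 e4
    push_cast at e1 e2 e3 e4 ⊢
    linear_combination (2*(b:ℂ)+(s:ℂ)+4) * e1
      - (6*(b:ℂ)+3*(s:ℂ)+11)*(2*(b:ℂ)+(s:ℂ)+4)*((s:ℂ)+2) * e2
      - (2*(b:ℂ)+(s:ℂ)+4)*((s:ℂ)+2)*((s:ℂ)+1) * e3
      - 3*(2*(b:ℂ)+(s:ℂ)+4)*((b:ℂ)+1) * e4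
lemma rel3 (k m : ℕ) (z : ℂ) :
    ((m:ℂ)+2) * Pval k (m+2) z
      = ((m:ℂ)+(k:ℂ)+2) * Pval k (m+1) z + ((m:ℂ)+2*(k:ℂ)+2) * (z * Pval k m z) := by
  rw [Pval_eq k (m+2) z (m+3+1) (by omega), Pval_eq k (m+1) z (m+3+1) (by omega),
      Pval_eq k m z (m+3+1) (by omega), shiftz_co k m (m+3) z (by omega),
      Finset.mul_sum, Finset.mul_sum, Finset.mul_sum, ← Finset.sum_add_distrib]
  refine Finset.sum_congr rfl fun b _ => ?_
  cases b with
  | zero =>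
      simp only [if_pos rfl, if_true, pow_zero, mul_one, zero_mul, mul_zero, add_zero]
      linear_combination c3z k m
  | succ b =>
      simp only [if_neg (Nat.succ_ne_zero b), Nat.add_sub_cancel]
      linear_combination (z^(b+1)) * c3s k m b

lemma rel1 (k m : ℕ) (z : ℂ) :
    Pval (k+1) (m+2) z = Pval k (m+2) z + Pval (k+1) (m+1) z + z * Pval (k+1) m z := by
  rw [Pval_eq (k+1) (m+2) z (m+3+1) (by omega), Pval_eq k (m+2) z (m+3+1) (by omega),
      Pval_eq (k+1) (m+1) z (m+3+1) (by omega), Pval_eq (k+1) m z (m+3+1) (by omega),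
      shiftz_co (k+1) m (m+3) z (by omega), ← Finset.sum_add_distrib, ← Finset.sum_add_distrib]
  refine Finset.sum_congr rfl fun b _ => ?_
  cases b with
  | zero =>
      simp only [if_pos rfl, if_true, pow_zero, mul_one, zero_mul, mul_zero, add_zero]
      linear_combination c1z k m
  | succ b =>
      simp only [if_neg (Nat.succ_ne_zero b), Nat.add_sub_cancel]
      linear_combination (z^(b+1)) * c1s k m b

lemma rel2 (k m : ℕ) (z : ℂ) :
    ((m:ℂ)+2) * Pval k (m+2) z
      = ((k:ℂ)+1) * Pval (k+1) (m+1) z + 2*((k:ℂ)+1) * (z * Pval (k+1) m z) := by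
  rw [Pval_eq k (m+2) z (m+3+1) (by omega), Pval_eq (k+1) (m+1) z (m+3+1) (by omega),
      Pval_eq (k+1) m z (m+3+1) (by omega), shiftz_co (k+1) m (m+3) z (by omega),
      Finset.mul_sum, Finset.mul_sum, Finset.mul_sum, ← Finset.sum_add_distrib]
  refine Finset.sum_congr rfl fun b _ => ?_
  cases b with
  | zero =>
      simp only [if_pos rfl, if_true, pow_zero, mul_one, zero_mul, mul_zero, add_zero]
      linear_combination c2z k m
  | succ b =>
      simp only [if_neg (Nat.succ_ne_zero b), Nat.add_sub_cancel]
      linear_combination (z^(b+1)) * c2s k m b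

lemma relJ (m : ℕ) (z : ℂ) :
    ((m:ℂ)+2) * Pval (m+2) (m+2) z
      = (3*(m:ℂ)+5) * Pval (m+1) (m+1) z + ((m:ℂ)+2) * Pval (m+2) m z
        + 3*((m:ℂ)+2) * (z * Pval (m+2) m z) := by
  rw [Pval_eq (m+2) (m+2) z (m+3+1) (by omega), Pval_eq (m+1) (m+1) z (m+3+1) (by omega),
      Pval_eq (m+2) m z (m+3+1) (by omega), shiftz_co (m+2) m (m+3) z (by omega),
      Finset.mul_sum, Finset.mul_sum, Finset.mul_sum, Finset.mul_sum,
      ← Finset.sum_add_distrib, ← Finset.sum_add_distrib]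
  refine Finset.sum_congr rfl fun b _ => ?_
  cases b with
  | zero =>
      simp only [if_pos rfl, if_true, pow_zero, mul_one, zero_mul, mul_zero, add_zero]
      linear_combination cJz m
  | succ b =>
      simp only [if_neg (Nat.succ_ne_zero b), Nat.add_sub_cancel]
      linear_combination (z^(b+1)) * cJs m b
lemma Pval_zero (k : ℕ) (z : ℂ) : Pval k 0 z = 1 := by
  simp [Pval, mult3_eq_choose]

lemma prop_false (k : ℕ) (z : ℂ) (hz : z ≠ 0) :
    ∀ m, Pval k m z = 0 → Pval k (m+1) z = 0 → False := by
  intro m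
  induction m with
  | zero =>
      intro h0 _
      rw [Pval_zero] at h0
      exact one_ne_zero h0
  | succ m ih =>
      intro h1 h2
      have h3 := rel3 k m z
      have h4 : ((m:ℂ)+2*(k:ℂ)+2) * (z * Pval k m z) = 0 := by
        linear_combination (-1 : ℂ) * h3 + ((m:ℂ)+2) * h2 - ((m:ℂ)+(k:ℂ)+2) * h1
      have hcne : ((m:ℂ)+2*(k:ℂ)+2) ≠ 0 := by
        have : ((m+2*k+2 : ℕ) : ℂ) ≠ 0 := Nat.cast_ne_zero.mpr (by omega)
        push_cast at this
        exact this
      rcases mul_eq_zero.mp h4 with h | h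
      · exact hcne h
      · rcases mul_eq_zero.mp h with h | h
        · exact hz h
        · exact ih h h1

lemma pd_third : ∀ n : ℕ, Pval n n (-1/3 : ℂ) ≠ 0 := by
  intro n
  induction n using Nat.strong_induction_on with
  | _ n ih =>
    match n, ih with
    | 0, _ => rw [Pval_zero]; exact one_ne_zero
    | 1, _ =>
        intro h
        have : Pval 1 1 (-1/3 : ℂ) = 2 := by
          norm_num [Pval, Finset.sum_range_one, mult3, Nat.factorial]
        rw [this] at h
        norm_num at h
    | (m+2), ih =>
        intro h
        have hJ := relJ m (-1/3 : ℂ)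
        have h5 : (3*(m:ℂ)+5) * Pval (m+1) (m+1) (-1/3 : ℂ) = 0 := by
          linear_combination (-1 : ℂ) * hJ + ((m:ℂ)+2) * h
        have hcne : (3*(m:ℂ)+5) ≠ 0 := by
          have : ((3*m+5 : ℕ) : ℂ) ≠ 0 := Nat.cast_ne_zero.mpr (by omega)
          push_cast at this
          exact this
        exact ih (m+1) (by omega) ((mul_eq_zero.mp h5).resolve_left hcne)
lemma key_b1 (e : ℕ) (z : ℂ) (hz : z ≠ 0) (hE : Pval (e+2) (e+2) z = 0) :
    Pval (e+3) (e+1) z ≠ 0 := by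
  intro h1
  have hr1 := rel1 (e+2) e z
  have hr3 := rel3 (e+3) e z
  push_cast at hr1 hr3
  have key : (2*(e:ℂ)+6) * (z * Pval (e+3) e z) = 0 := by
    linear_combination ((e:ℂ)+2) * hr1 - hr3 + ((e:ℂ)+2) * hE - ((e:ℂ)+3) * h1
  have hcne : (2*(e:ℂ)+6) ≠ 0 := by
    have : ((2*e+6 : ℕ) : ℂ) ≠ 0 := Nat.cast_ne_zero.mpr (by omega)
    push_cast at this; exact this
  rcases mul_eq_zero.mp key with h | h
  · exact hcne h
  · rcases mul_eq_zero.mp h with h | h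
    · exact hz h
    · exact prop_false (e+3) z hz e h h1

lemma key_b0 (e : ℕ) (z : ℂ) (hz : z ≠ 0) (hE : Pval (e+2) (e+2) z = 0) :
    Pval (e+3) e z ≠ 0 := by
  intro h0
  have hr1 := rel1 (e+2) e z
  have hr3 := rel3 (e+3) e z
  push_cast at hr1 hr3
  have key : ((e:ℂ)+3) * Pval (e+3) (e+1) z = 0 := by
    linear_combination (-1 : ℂ) * hr3 + ((e:ℂ)+2) * hr1 + ((e:ℂ)+2) * hE - (2*(e:ℂ)+6)*z * h0
  have hcne : ((e:ℂ)+3) ≠ 0 := by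
    have : ((e+3 : ℕ) : ℂ) ≠ 0 := Nat.cast_ne_zero.mpr (by omega)
    push_cast at this; exact this
  exact prop_false (e+3) z hz e h0 ((mul_eq_zero.mp key).resolve_left hcne)

lemma key_top (e : ℕ) (z : ℂ) (hz : z ≠ 0) (hE : Pval (e+2) (e+2) z = 0) :
    Pval (e+3) (e+3) z ≠ 0 := by
  intro h
  have h13 : (1 + 3*z) ≠ 0 := by
    intro H
    have hz3 : z = (-1/3 : ℂ) := by linear_combination H / 3
    exact pd_third (e+2) (hz3 ▸ hE)
  have hJ := relJ (e+1) z
  push_cast at hJ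
  have key : ((1+3*z) * ((e:ℂ)+3)) * Pval (e+3) (e+1) z = 0 := by
    linear_combination (-1 : ℂ) * hJ + ((e:ℂ)+3) * h - (3*(e:ℂ)+8) * hE
  have hcne : ((e:ℂ)+3) ≠ 0 := by
    have : ((e+3 : ℕ) : ℂ) ≠ 0 := Nat.cast_ne_zero.mpr (by omega)
    push_cast at this; exact this
  exact key_b1 e z hz hE ((mul_eq_zero.mp key).resolve_left (mul_ne_zero h13 hcne))

lemma key_det (e : ℕ) (z : ℂ) (hz : z ≠ 0) (hE : Pval (e+4) (e+4) z = 0) :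
    Pval (e+5) (e+3) z * Pval (e+6) (e+3) z - Pval (e+5) (e+2) z * Pval (e+6) (e+4) z ≠ 0 := by
  have hb2 := rel1 (e+5) e z
  have hb3 := rel1 (e+5) (e+1) z
  have hbE := rel1 (e+4) (e+2) z
  have hbd := rel2 (e+5) (e+2) z
  have hbp := rel2 (e+5) (e+3) z
  have hc3 := rel3 (e+6) (e+1) z
  have hc4 := rel3 (e+6) (e+2) z
  have hc2 := rel3 (e+6) e z
  push_cast at hb2 hb3 hbE hbd hbp hc3 hc4 hc2
  have h2z : ((e:ℂ)+2) ≠ 0 := by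
    have : ((e+2 : ℕ) : ℂ) ≠ 0 := Nat.cast_ne_zero.mpr (by omega); push_cast at this; exact this
  have h3z : ((e:ℂ)+3) ≠ 0 := by
    have : ((e+3 : ℕ) : ℂ) ≠ 0 := Nat.cast_ne_zero.mpr (by omega); push_cast at this; exact this
  have h4z : ((e:ℂ)+4) ≠ 0 := by
    have : ((e+4 : ℕ) : ℂ) ≠ 0 := Nat.cast_ne_zero.mpr (by omega); push_cast at this; exact this
  have h5z : ((e:ℂ)+5) ≠ 0 := by
    have : ((e+5 : ℕ) : ℂ) ≠ 0 := Nat.cast_ne_zero.mpr (by omega); push_cast at this; exact this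
  have h6z : ((e:ℂ)+6) ≠ 0 := by
    have : ((e+6 : ℕ) : ℂ) ≠ 0 := Nat.cast_ne_zero.mpr (by omega); push_cast at this; exact this
  -- the master quadratic identity (multiplied by (e+2)^2 (e+3)^2 (e+4)(e+5))
  have master : ((e:ℂ)+2)^2*((e:ℂ)+3)^2*((e:ℂ)+4)*((e:ℂ)+5) *
        ( ((e:ℂ)+5)*((e:ℂ)+6)
            * (Pval (e+5) (e+3) z * Pval (e+6) (e+3) z - Pval (e+5) (e+2) z * Pval (e+6) (e+4) z)
          + ((e:ℂ)+5)^2 * (Pval (e+5) (e+2) z * Pval (e+5) (e+5) z) )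
      = ((e:ℂ)+2)^2*((e:ℂ)+3)^2*((e:ℂ)+4)*((e:ℂ)+5) *
        ( ((e:ℂ)+4)*((e:ℂ)+6) * Pval (e+6) (e+3) z
          * (Pval (e+5) (e+4) z - Pval (e+5) (e+3) z - z * Pval (e+5) (e+2) z) ) := by
    linear_combination ((3600:ℂ)*(Pval (e+5) (e+2) z) + (8340:ℂ)*(e:ℂ)*(Pval (e+5) (e+2) z) + (8104:ℂ)*(e:ℂ)^2*(Pval (e+5) (e+2) z) + (4281:ℂ)*(e:ℂ)^3*(Pval (e+5) (e+2) z) + (1328:ℂ)*(e:ℂ)^4*(Pval (e+5) (e+2) z) + (242:ℂ)*(e:ℂ)^5*(Pval (e+5) (e+2) z) + (24:ℂ)*(e:ℂ)^6*(Pval (e+5) (e+2) z) + (1:ℂ)*(e:ℂ)^7*(Pval (e+5) (e+2) z)) * hbp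
      + ((-4320:ℂ)*(Pval (e+6) (e+3) z) + (-9864:ℂ)*(e:ℂ)*(Pval (e+6) (e+3) z) + (-9420:ℂ)*(e:ℂ)^2*(Pval (e+6) (e+3) z) + (-4874:ℂ)*(e:ℂ)^3*(Pval (e+6) (e+3) z) + (-1475:ℂ)*(e:ℂ)^4*(Pval (e+6) (e+3) z) + (-261:ℂ)*(e:ℂ)^5*(Pval (e+6) (e+3) z) + (-25:ℂ)*(e:ℂ)^6*(Pval (e+6) (e+3) z) + (-1:ℂ)*(e:ℂ)^7*(Pval (e+6) (e+3) z)) * hbd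
      + ((-38880:ℂ)*(Pval (e+6) (e+3) z) + (-97416:ℂ)*(e:ℂ)*(Pval (e+6) (e+3) z) + (-104508:ℂ)*(e:ℂ)^2*(Pval (e+6) (e+3) z) + (-62706:ℂ)*(e:ℂ)^3*(Pval (e+6) (e+3) z) + (-23023:ℂ)*(e:ℂ)^4*(Pval (e+6) (e+3) z) + (-5299:ℂ)*(e:ℂ)^5*(Pval (e+6) (e+3) z) + (-747:ℂ)*(e:ℂ)^6*(Pval (e+6) (e+3) z) + (-59:ℂ)*(e:ℂ)^7*(Pval (e+6) (e+3) z) + (-2:ℂ)*(e:ℂ)^8*(Pval (e+6) (e+3) z)) * hb3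
      + ((-60480:ℂ)*z*(Pval (e+6) (e+3) z) + (-151056:ℂ)*(e:ℂ)*z*(Pval (e+6) (e+3) z) + (-161472:ℂ)*(e:ℂ)^2*z*(Pval (e+6) (e+3) z) + (-96496:ℂ)*(e:ℂ)^3*z*(Pval (e+6) (e+3) z) + (-35272:ℂ)*(e:ℂ)^4*z*(Pval (e+6) (e+3) z) + (-8079:ℂ)*(e:ℂ)^5*z*(Pval (e+6) (e+3) z) + (-1133:ℂ)*(e:ℂ)^6*z*(Pval (e+6) (e+3) z) + (-89:ℂ)*(e:ℂ)^7*z*(Pval (e+6) (e+3) z) + (-3:ℂ)*(e:ℂ)^8*z*(Pval (e+6) (e+3) z)) * hb2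
      + ((4320:ℂ)*(Pval (e+6) (e+3) z) + (2880:ℂ)*z*(Pval (e+6) (e+2) z) + (-11520:ℂ)*z*(Pval (e+6) (e+1) z) + (-20160:ℂ)*z^2*(Pval (e+6) e z) + (9864:ℂ)*(e:ℂ)*(Pval (e+6) (e+3) z) + (7056:ℂ)*(e:ℂ)*z*(Pval (e+6) (e+2) z) + (-25344:ℂ)*(e:ℂ)*z*(Pval (e+6) (e+1) z) + (-43632:ℂ)*(e:ℂ)*z^2*(Pval (e+6) e z) + (9420:ℂ)*(e:ℂ)^2*(Pval (e+6) (e+3) z) + (7216:ℂ)*(e:ℂ)^2*z*(Pval (e+6) (e+2) z) + (-23248:ℂ)*(e:ℂ)^2*z*(Pval (e+6) (e+1) z) + (-39280:ℂ)*(e:ℂ)^2*z^2*(Pval (e+6) e z) + (4874:ℂ)*(e:ℂ)^3*(Pval (e+6) (e+3) z) + (3984:ℂ)*(e:ℂ)^3*z*(Pval (e+6) (e+2) z) + (-11528:ℂ)*(e:ℂ)^3*z*(Pval (e+6) (e+1) z) + (-19072:ℂ)*(e:ℂ)^3*z^2*(Pval (e+6) e z) + (1475:ℂ)*(e:ℂ)^4*(Pval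 (e+6) (e+3) z) + (1280:ℂ)*(e:ℂ)^4*z*(Pval (e+6) (e+2) z) + (-3340:ℂ)*(e:ℂ)^4*z*(Pval (e+6) (e+1) z) + (-5400:ℂ)*(e:ℂ)^4*z^2*(Pval (e+6) e z) + (261:ℂ)*(e:ℂ)^5*(Pval (e+6) (e+3) z) + (239:ℂ)*(e:ℂ)^5*z*(Pval (e+6) (e+2) z) + (-566:ℂ)*(e:ℂ)^5*z*(Pval (e+6) (e+1) z) + (-893:ℂ)*(e:ℂ)^5*z^2*(Pval (e+6) e z) + (25:ℂ)*(e:ℂ)^6*(Pval (e+6) (e+3) z) + (24:ℂ)*(e:ℂ)^6*z*(Pval (e+6) (e+2) z) + (-52:ℂ)*(e:ℂ)^6*z*(Pval (e+6) (e+1) z) + (-80:ℂ)*(e:ℂ)^6*z^2*(Pval (e+6) e z) + (1:ℂ)*(e:ℂ)^7*(Pval (e+6) (e+3) z) + (1:ℂ)*(e:ℂ)^7*z*(Pval (e+6) (e+2) z) + (-2:ℂ)*(e:ℂ)^7*z*(Pval (e+6) (e+1) z) + (-3:ℂ)*(e:ℂ)^7*z^2*(Pval (e+6) e z)) * hc3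
      + ((12960:ℂ)*z*(Pval (e+6) (e+2) z) + (21600:ℂ)*z^2*(Pval (e+6) (e+1) z) + (28152:ℂ)*(e:ℂ)*z*(Pval (e+6) (e+2) z) + (46440:ℂ)*(e:ℂ)*z^2*(Pval (e+6) (e+1) z) + (25452:ℂ)*(e:ℂ)^2*z*(Pval (e+6) (e+2) z) + (41484:ℂ)*(e:ℂ)^2*z^2*(Pval (e+6) (e+1) z) + (12418:ℂ)*(e:ℂ)^3*z*(Pval (e+6) (e+2) z) + (19962:ℂ)*(e:ℂ)^3*z^2*(Pval (e+6) (e+1) z) + (3535:ℂ)*(e:ℂ)^4*z*(Pval (e+6) (e+2) z) + (5595:ℂ)*(e:ℂ)^4*z^2*(Pval (e+6) (e+1) z) + (588:ℂ)*(e:ℂ)^5*z*(Pval (e+6) (e+2) z) + (915:ℂ)*(e:ℂ)^5*z^2*(Pval (e+6) (e+1) z) + (53:ℂ)*(e:ℂ)^6*z*(Pval (e+6) (e+2) z) + (81:ℂ)*(e:ℂ)^6*z^2*(Pval (e+6) (e+1) z) + (2:ℂ)*(e:ℂ)^7*z*(Pval (e+6) (e+2) z) + (3:ℂ)*(e:ℂ)^7*z^2*(Pval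 (e+6) (e+1) z)) * hc2
  -- with the root hypothesis the RHS vanishes
  have hvan : Pval (e+5) (e+4) z - Pval (e+5) (e+3) z - z * Pval (e+5) (e+2) z = 0 := by
    linear_combination hbE + hE
  have hB2 : Pval (e+5) (e+2) z ≠ 0 := key_b0 (e+2) z hz hE
  have hB5 : Pval (e+5) (e+5) z ≠ 0 := key_top (e+2) z hz hE
  intro hdet
  rw [hdet, hvan, mul_zero, mul_zero, zero_add] at master
  have hMne : ((e:ℂ)+2)^2*((e:ℂ)+3)^2*((e:ℂ)+4)*((e:ℂ)+5) ≠ 0 :=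
    mul_ne_zero (mul_ne_zero (mul_ne_zero (pow_ne_zero 2 h2z) (pow_ne_zero 2 h3z)) h4z) h5z
  rw [mul_zero] at master
  exact (mul_ne_zero hMne (mul_ne_zero (pow_ne_zero 2 h5z) (mul_ne_zero hB2 hB5))) master
lemma exists_root (d : ℕ) (hd : 2 ≤ d) : ∃ z : ℂ, Pval d d z = 0 ∧ z ≠ 0 := by
  set p : Polynomial ℂ :=
    ∑ b ∈ Finset.range (d/2+1), Polynomial.C ((mult3 d b (d-2*b) : ℕ) : ℂ) * Polynomial.X^b with hp
  have heval : ∀ z, p.eval z = Pval d d z := by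
    intro z
    rw [hp, Polynomial.eval_finset_sum]
    unfold Pval
    exact Finset.sum_congr rfl fun b _ => by simp
  have hcoeff : p.coeff (d/2) ≠ 0 := by
    rw [hp, Polynomial.finset_sum_coeff]
    rw [Finset.sum_eq_single (d/2)]
    · rw [Polynomial.coeff_C_mul, Polynomial.coeff_X_pow, if_pos rfl, mul_one]
      exact Nat.cast_ne_zero.mpr (mult3_pos d (d/2) (d - 2*(d/2))).ne'
    · intro b _ hb
      rw [Polynomial.coeff_C_mul, Polynomial.coeff_X_pow, if_neg (fun h => hb h.symm), mul_zero]
    · intro h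
      exact absurd (Finset.self_mem_range_succ (d/2)) h
  have hdeg : 0 < p.degree := by
    have h1 : ((d/2 : ℕ) : WithBot ℕ) ≤ p.degree := Polynomial.le_degree_of_ne_zero hcoeff
    have h2 : (0 : WithBot ℕ) < ((d/2 : ℕ) : WithBot ℕ) := by
      exact_mod_cast (by omega : 0 < d/2)
    exact lt_of_lt_of_le h2 h1
  obtain ⟨z, hzroot⟩ := Complex.exists_root hdeg
  refine ⟨z, by rw [← heval]; exact hzroot, ?_⟩
  rintro rfl
  have hv : Pval d d 0 = ((mult3 d 0 (d - 2*0) : ℕ) : ℂ) := by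
    unfold Pval
    rw [Finset.sum_eq_single 0]
    · rw [pow_zero, mul_one]
    · intro b _ hb
      rw [zero_pow hb, mul_zero]
    · intro h
      exact absurd (Finset.mem_range.mpr (by omega)) h
  have : Pval d d 0 = 0 := by rw [← heval]; exact hzroot
  rw [hv] at this
  exact Nat.cast_ne_zero.mpr (mult3_pos d 0 (d - 2*0)).ne' this

theorem stmt13 (d : ℕ) (hd : 2 ≤ d) :
    ∃ lam : ℂ, lam ≠ 0 ∧ Pval d d lam = 0 ∧ Pval (d+1) (d+1) lam ≠ 0 ∧
      Pval (d+1) (d-1) lam * Pval (d+2) (d-1) lam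
        - Pval (d+1) (d-2) lam * Pval (d+2) d lam ≠ 0 := by
  rcases (by omega : d = 2 ∨ d = 3 ∨ 4 ≤ d) with rfl | rfl | h4
  · have A1 : mult3 2 0 2 = 6 := by decide
    have A2 : mult3 2 1 0 = 3 := by decide
    have A3 : mult3 3 0 3 = 20 := by decide
    have A4 : mult3 3 1 1 = 20 := by decide
    have A5 : mult3 3 0 1 = 4 := by decide
    have A6 : mult3 4 0 1 = 5 := by decide
    have A7 : mult3 3 0 0 = 1 := by decide
    have A8 : mult3 4 0 2 = 15 := by decide
    have A9 : mult3 4 1 0 = 5 := by decide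
    refine ⟨-2, by norm_num, ?_, ?_, ?_⟩
    · norm_num [Pval, Finset.sum_range_succ, A1, A2]
    · norm_num [Pval, Finset.sum_range_succ, A3, A4]
    · norm_num [Pval, Finset.sum_range_succ, A5, A6, A7, A8, A9]
  · have A1 : mult3 3 0 3 = 20 := by decide
    have A2 : mult3 3 1 1 = 20 := by decide
    have A3 : mult3 4 0 4 = 70 := by decide
    have A4 : mult3 4 1 2 = 105 := by decide
    have A5 : mult3 4 2 0 = 15 := by decide
    have A6 : mult3 4 0 2 = 15 := by decide
    have A7 : mult3 4 1 0 = 5 := by decide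
    have A8 : mult3 5 0 2 = 21 := by decide
    have A9 : mult3 5 1 0 = 6 := by decide
    have A10 : mult3 4 0 1 = 5 := by decide
    have A11 : mult3 5 0 3 = 56 := by decide
    have A12 : mult3 5 1 1 = 42 := by decide
    refine ⟨-1, by norm_num, ?_, ?_, ?_⟩
    · norm_num [Pval, Finset.sum_range_succ, A1, A2]
    · norm_num [Pval, Finset.sum_range_succ, A3, A4, A5]
    · norm_num [Pval, Finset.sum_range_succ, A6, A7, A8, A9, A10, A11, A12]
  · obtain ⟨e, rfl⟩ : ∃ e, d = e+4 := ⟨d-4, by omega⟩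
    obtain ⟨z, hE, hz⟩ := exists_root (e+4) (by omega)
    refine ⟨z, hz, hE, ?_, ?_⟩
    · exact key_top (e+2) z hz hE
    · have h := key_det e z hz hE
      simpa [show e+4-1 = e+3 by omega, show e+4-2 = e+2 by omega] using h
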